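/- Let n ≥ 2 and let A = I + E_{n,n-1} ∈ M_n(K), which is invertible with inverse I − E_{n,n-1}. Then the subalgebra W = M[R_n, R_{n-1}, C_n] of matrices with zero n-th row, zero (n-1)-th row, and zero n-th column equals the intersection of the two subalgebras A^{-1} M[R_n,C_n] A and M[R_n,C_n], where M[R_n,C_n] is the subalgebra of matrices with zero n-th row and zero n-th column. -/

import Mathlib

/-- For `n ≥ 2` and `A = I + Eₙ,ₙ₋₁` (invertible with inverse
`I - Eₙ,ₙ₋₁`), the subalgebra `W = M[Rₙ, Rₙ₋₁, Cₙ]` equals the intersection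
`A⁻¹ M[Rₙ,Cₙ] A ∩ M[Rₙ,Cₙ]`. -/
theorem stmt1 (K : Type*) [Field K] [CharZero K] (n : ℕ) (hn : 2 ≤ n)
    (A : Matrix (Fin n) (Fin n) K)
    (hA : A = 1 + Matrix.single ⟨n - 1, by omega⟩ ⟨n - 2, by omega⟩ 1)
    (A' : Matrix (Fin n) (Fin n) K)
    (hA' : A' = 1 - Matrix.single ⟨n - 1, by omega⟩ ⟨n - 2, by omega⟩ 1)
    (MRC : Set (Matrix (Fin n) (Fin n) K))
    (hMRC : MRC = {M | (∀ j, M ⟨n - 1, by omega⟩ j = 0) ∧ (∀ i, M i ⟨n - 1, by omega⟩ = 0)})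
    (W : Set (Matrix (Fin n) (Fin n) K))
    (hW : W = {M | (∀ j, M ⟨n - 1, by omega⟩ j = 0) ∧ (∀ j, M ⟨n - 2, by omega⟩ j = 0) ∧
        (∀ i, M i ⟨n - 1, by omega⟩ = 0)}) :
    A * A' = 1 ∧ A' * A = 1 ∧
    W = ((fun M => A' * M * A) '' MRC) ∩ MRC := by
  set e : Fin n := ⟨n - 1, by omega⟩ with he
  set f : Fin n := ⟨n - 2, by omega⟩ with hf
  have hfe : f ≠ e := by simp [he, hf, Fin.ext_iff]; omega
  set E : Matrix (Fin n) (Fin n) K := Matrix.single e f 1 with hE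
  have hEE : E * E = 0 := Matrix.single_mul_single_of_ne 1 e f e hfe 1
  have hAA' : A * A' = 1 := by
    rw [hA, hA']; rw [show (1 + E) * (1 - E) = 1 - E * E by noncomm_ring, hEE, sub_zero]
  have hA'A : A' * A = 1 := by
    rw [hA, hA']; rw [show (1 - E) * (1 + E) = 1 - E * E by noncomm_ring, hEE, sub_zero]
  refine ⟨hAA', hA'A, ?_⟩
  ext M
  subst hMRC hW
  constructor
  · rintro ⟨hre, hrf, hce⟩
    refine ⟨⟨A * M * A', ⟨?_, ?_⟩, ?_⟩, hre, hce⟩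
    · -- row e of A M A' is zero
      intro j
      have hME : M * E = 0 := by
        ext i j
        by_cases hj : j = f
        · subst hj; rw [hE, Matrix.mul_single_apply_same]; simp [hce]
        · rw [hE, Matrix.mul_single_apply_of_ne _ _ _ _ _ hj]; rfl
      have : A * M * A' = M + E * M := by
        rw [hA, hA']
        rw [show (1 + E) * M * (1 - E) = M + E * M - M * E - E * (M * E) by noncomm_ring,
          hME, Matrix.mul_zero, sub_zero, sub_zero]
      rw [this]
      simp only [Matrix.add_apply, hre j, hE, Matrix.single_mul_apply_same, one_mul,
        hrf j, add_zero, zero_add]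
    · -- col e of A M A' is zero
      intro i
      have hME : M * E = 0 := by
        ext i j
        by_cases hj : j = f
        · subst hj; rw [hE, Matrix.mul_single_apply_same]; simp [hce]
        · rw [hE, Matrix.mul_single_apply_of_ne _ _ _ _ _ hj]; rfl
      have : A * M * A' = M + E * M := by
        rw [hA, hA']
        rw [show (1 + E) * M * (1 - E) = M + E * M - M * E - E * (M * E) by noncomm_ring,
          hME, Matrix.mul_zero, sub_zero, sub_zero]
      rw [this]
      simp only [Matrix.add_apply, hce i]
      by_cases hi : i = e
      · subst hi; rw [hE, Matrix.single_mul_apply_same]; simp [hce]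
      · rw [hE, Matrix.single_mul_apply_of_ne _ _ _ _ _ hi]; simp
    · -- A' (A M A') A = M
      show A' * (A * M * A') * A = M
      rw [← Matrix.mul_assoc, ← Matrix.mul_assoc, hA'A, Matrix.one_mul, Matrix.mul_assoc,
        hA'A, Matrix.mul_one]
  · rintro ⟨⟨N, ⟨hNre, hNce⟩, hMN⟩, hre, hce⟩
    refine ⟨hre, ?_, hce⟩
    -- M = A' N A = N - E N  (since N E = 0)
    have hNE : N * E = 0 := by
      ext i j
      by_cases hj : j = f
      · subst hj; rw [hE, Matrix.mul_single_apply_same]; simp [hNce]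
      · rw [hE, Matrix.mul_single_apply_of_ne _ _ _ _ _ hj]; rfl
    replace hMN : A' * N * A = M := hMN
    have hM : M = N - E * N := by
      rw [← hMN, hA, hA']
      rw [show (1 - E) * N * (1 + E) = N - E * N + N * E - E * (N * E) by noncomm_ring,
        hNE, Matrix.mul_zero, sub_zero, add_zero]
    -- row e of M = - row f of N, so row f of N = 0
    have hNf : ∀ j, N f j = 0 := by
      intro j
      have := hre j
      rw [hM] at this
      simp only [Matrix.sub_apply, hNre j, hE, Matrix.single_mul_apply_same,
        one_mul, zero_sub, neg_eq_zero] at this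
      exact this
    intro j
    rw [hM]
    simp only [Matrix.sub_apply, hNf j]
    rw [hE, Matrix.single_mul_apply_of_ne _ _ _ _ _ hfe]
    simp
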